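/- For every probability distribution J on [0,1] × {0,1}, ℓ1-ATB(J) ≤ 3 · distCal(J), where distCal is the lower distance to calibration. -/

import Mathlib

open MeasureTheory Finset
open scoped ENNReal

noncomputable section

/-- Bias of the lower bin `{v < q}` under a distribution `mu` of prediction-state pairs. -/
def binNeg (mu : Measure (ℝ × ℝ)) (q : ℝ) : ℝ :=
  ∫ x, (x.1 - x.2) * (if x.1 < q then 1 else 0) ∂mu

/-- Bias of the upper bin `{v ≥ q}` under a distribution `mu` of prediction-state pairs. -/
def binPos (mu : Measure (ℝ × ℝ)) (q : ℝ) : ℝ :=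
  ∫ x, (x.1 - x.2) * (if q ≤ x.1 then 1 else 0) ∂mu

/-- Averaged two-bin calibration error of a prediction-state distribution. -/
def ATB (mu : Measure (ℝ × ℝ)) : ℝ :=
  ∫ q in (0:ℝ)..1, ((binNeg mu q)^2 + (binPos mu q)^2)

/-- ℓ1 variant of the averaged two-bin calibration error of a distribution. -/
def l1ATB (mu : Measure (ℝ × ℝ)) : ℝ :=
  ∫ q in (0:ℝ)..1, (|binNeg mu q| + |binPos mu q|)

/-- A distribution of `(v, y)` is calibrated if `E[y | v] = v` almost surely; equivalently,
`∫ y = ∫ v` over every event measurable in the prediction `v`. -/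
def Calibrated (mu : Measure (ℝ × ℝ)) : Prop :=
  ∀ s : Set ℝ, MeasurableSet s →
    ∫ x in Prod.fst ⁻¹' s, x.2 ∂mu = ∫ x in Prod.fst ⁻¹' s, x.1 ∂mu

/-- The lower distance to calibration: the infimum of `E |u - v|` over couplings `(u, v, y)`
whose `(v,y)`-marginal is `mu` and whose `(u,y)`-marginal is calibrated. -/
def distCal (mu : Measure (ℝ × ℝ)) : ℝ :=
  sInf { c : ℝ | ∃ P : Measure (ℝ × ℝ × ℝ), IsProbabilityMeasure P ∧
    P.map (fun x => x.2) = mu ∧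
    Calibrated (P.map (fun x => (x.1, x.2.2))) ∧
    (∀ᵐ x ∂P, x.1 ∈ Set.Icc (0:ℝ) 1) ∧
    c = ∫ x, |x.1 - x.2.1| ∂P }

lemma pointwise_bound (u v y q : ℝ) (hv : |v - y| ≤ 1) (hu : |u - y| ≤ 1) :
    |(v - y) * (if v < q then 1 else 0) - (u - y) * (if u < q then 1 else 0)| +
      |(v - y) * (if q ≤ v then 1 else 0) - (u - y) * (if q ≤ u then 1 else 0)| ≤
    |u - v| + 2 * (if v ⊓ u < q ∧ q ≤ v ⊔ u then 1 else 0) := by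
  rcases lt_or_ge v q with h1 | h1 <;> rcases lt_or_ge u q with h2 | h2
  · rw [if_pos h1, if_pos h2, if_neg (not_le.2 h1), if_neg (not_le.2 h2),
      if_neg (by simp [not_le.2 (sup_lt_iff.2 ⟨h1, h2⟩)])]
    rw [abs_sub_comm u v]
    simp [abs_sub_comm (v - y)]
  · rw [if_pos h1, if_neg (not_lt.2 h2), if_neg (not_le.2 h1), if_pos h2,
      if_pos ⟨lt_of_le_of_lt inf_le_left h1, le_trans h2 le_sup_right⟩]
    have := abs_nonneg (u - v)
    simp only [mul_one, mul_zero, sub_zero, zero_sub, abs_neg]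
    linarith
  · rw [if_neg (not_lt.2 h1), if_pos h2, if_pos h1, if_neg (not_le.2 h2),
      if_pos ⟨lt_of_le_of_lt inf_le_right h2, le_trans h1 le_sup_left⟩]
    have := abs_nonneg (u - v)
    simp only [mul_one, mul_zero, zero_sub, abs_neg, sub_zero]
    linarith
  · rw [if_neg (not_lt.2 h1), if_neg (not_lt.2 h2), if_pos h1, if_pos h2,
      if_neg (by simp [not_lt.2 (le_inf h1 h2)])]
    rw [abs_sub_comm u v]
    simp [abs_sub_comm (v - y)]

lemma ite_split (a b q : ℝ) (hab : a ≤ b) :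
    (if a < q ∧ q ≤ b then (1:ℝ) else 0) =
      (if a < q then (1:ℝ) else 0) - (if b < q then 1 else 0) := by
  rcases lt_or_ge a q with h1 | h1 <;> rcases lt_or_ge b q with h2 | h2
  · rw [if_neg (by simp [not_le.2 h2]), if_pos h1, if_pos h2]; ring
  · rw [if_pos ⟨h1, h2⟩, if_pos h1, if_neg (not_lt.2 h2)]; ring
  · linarith
  · rw [if_neg (by simp [not_lt.2 h1]), if_neg (not_lt.2 h1), if_neg (not_lt.2 h2)]; ring

lemma integrable_bdd {α : Type*} [MeasurableSpace α] (P : Measure α) [IsFiniteMeasure P]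
    {f : α → ℝ} (hf : AEStronglyMeasurable f P) {C : ℝ} (h : ∀ᵐ x ∂P, |f x| ≤ C) :
    Integrable f P :=
  (integrable_const C).mono' hf (by simpa [Real.norm_eq_abs] using h)

lemma cal_zero (P : Measure (ℝ × ℝ × ℝ)) [IsProbabilityMeasure P]
    (hcal : Calibrated (P.map (fun x => (x.1, x.2.2))))
    (hb : ∀ᵐ x ∂P, |x.1| ≤ 1 ∧ |x.2.2| ≤ 1)
    (s : Set ℝ) (hs : MeasurableSet s) :
    ∫ x, (Prod.fst ⁻¹' s : Set (ℝ × ℝ × ℝ)).indicator (fun x => x.1 - x.2.2) x ∂P = 0 := by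
  have hA : MeasurableSet (Prod.fst ⁻¹' s : Set (ℝ × ℝ × ℝ)) := hs.preimage measurable_fst
  rw [integral_indicator hA]
  have hg : Measurable (fun x : ℝ × ℝ × ℝ => (x.1, x.2.2)) := by fun_prop
  have h1 := hcal s hs
  rw [setIntegral_map (hs.preimage measurable_fst) (by fun_prop) hg.aemeasurable,
      setIntegral_map (hs.preimage measurable_fst) (by fun_prop) hg.aemeasurable] at h1
  have hi1 : Integrable (fun x : ℝ × ℝ × ℝ => x.1) P :=
    integrable_bdd P (by fun_prop) (hb.mono fun x hx => hx.1)
  have hi2 : Integrable (fun x : ℝ × ℝ × ℝ => x.2.2) P :=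
    integrable_bdd P (measurable_snd.snd.aestronglyMeasurable) (hb.mono fun x hx => hx.2)
  rw [integral_sub (hi1.integrableOn) (hi2.integrableOn)]
  have heq : ((fun x : ℝ × ℝ × ℝ => (x.1, x.2.2)) ⁻¹' (Prod.fst ⁻¹' s)) = Prod.fst ⁻¹' s := rfl
  rw [heq] at h1
  simp only [h1]
  ring

lemma main_bound (mu : Measure (ℝ × ℝ)) [IsProbabilityMeasure mu]
    (hsupp : ∀ᵐ x ∂mu, x.1 ∈ Set.Icc (0:ℝ) 1 ∧ (x.2 = 0 ∨ x.2 = 1))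
    (P : Measure (ℝ × ℝ × ℝ)) [IsProbabilityMeasure P]
    (hmap : P.map (fun x => x.2) = mu)
    (hcal : Calibrated (P.map (fun x => (x.1, x.2.2))))
    (hu : ∀ᵐ x ∂P, x.1 ∈ Set.Icc (0:ℝ) 1) :
    l1ATB mu ≤ 3 * ∫ x, |x.1 - x.2.1| ∂P := by
  -- a.e. facts
  have hvy : ∀ᵐ x ∂P, x.2.1 ∈ Set.Icc (0:ℝ) 1 ∧ (x.2.2 = 0 ∨ x.2.2 = 1) := by
    have h := hsupp
    rw [← hmap, ae_map_iff measurable_snd.aemeasurable] at h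
    · exact h
    · exact (measurable_fst measurableSet_Icc).inter
        ((measurable_snd (measurableSet_singleton 0)).union
          (measurable_snd (measurableSet_singleton 1)))
  have hB : ∀ᵐ x ∂P, 0 ≤ x.1 ∧ x.1 ≤ 1 ∧ 0 ≤ x.2.1 ∧ x.2.1 ≤ 1 ∧
      |x.2.1 - x.2.2| ≤ 1 ∧ |x.1 - x.2.2| ≤ 1 := by
    filter_upwards [hu, hvy] with x hx1 hx2
    obtain ⟨hu0, hu1⟩ := hx1
    obtain ⟨⟨hv0, hv1⟩, hy⟩ := hx2
    refine ⟨hu0, hu1, hv0, hv1, ?_, ?_⟩ <;> rcases hy with hy | hy <;> rw [hy, abs_le] <;>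
      constructor <;> linarith
  have hb' : ∀ᵐ x ∂P, |x.1| ≤ 1 ∧ |x.2.2| ≤ 1 := by
    filter_upwards [hu, hvy] with x hx1 hx2
    refine ⟨abs_le.2 ⟨by linarith [hx1.1], hx1.2⟩, ?_⟩
    rcases hx2.2 with hy | hy <;> rw [hy] <;> norm_num
  set c := ∫ x, |x.1 - x.2.1| ∂P with hc
  have hcnn : 0 ≤ c := integral_nonneg fun x => abs_nonneg _
  set F : ℝ → (ℝ × ℝ × ℝ) → ℝ := fun q x =>
    (x.2.1 - x.2.2) * (if x.2.1 < q then 1 else 0) -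
      (x.1 - x.2.2) * (if x.1 < q then 1 else 0) with hF
  set G : ℝ → (ℝ × ℝ × ℝ) → ℝ := fun q x =>
    (x.2.1 - x.2.2) * (if q ≤ x.2.1 then 1 else 0) -
      (x.1 - x.2.2) * (if q ≤ x.1 then 1 else 0) with hG
  have habs_ite : ∀ (a : ℝ) (p : Prop) [Decidable p], |a * (if p then (1:ℝ) else 0)| ≤ |a| := by
    intro a p _
    split_ifs <;> simp [abs_nonneg]
  have hintF1 : ∀ q, Integrable (fun x : ℝ × ℝ × ℝ =>
      (x.2.1 - x.2.2) * (if x.2.1 < q then 1 else 0)) P := by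
    intro q
    refine integrable_bdd P ?_ (C := 1) ?_
    · exact Measurable.aestronglyMeasurable (by
        apply Measurable.mul
        · fun_prop
        · exact Measurable.ite (measurableSet_lt (by fun_prop) measurable_const)
            measurable_const measurable_const)
    · filter_upwards [hB] with x hx
      exact le_trans (habs_ite _ _) hx.2.2.2.2.1
  have hintF2 : ∀ q, Integrable (fun x : ℝ × ℝ × ℝ =>
      (x.1 - x.2.2) * (if x.1 < q then 1 else 0)) P := by
    intro q
    refine integrable_bdd P ?_ (C := 1) ?_
    · exact Measurable.aestronglyMeasurable (by
        apply Measurable.mul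
        · fun_prop
        · exact Measurable.ite (measurableSet_lt (by fun_prop) measurable_const)
            measurable_const measurable_const)
    · filter_upwards [hB] with x hx
      exact le_trans (habs_ite _ _) hx.2.2.2.2.2
  have hintG1 : ∀ q, Integrable (fun x : ℝ × ℝ × ℝ =>
      (x.2.1 - x.2.2) * (if q ≤ x.2.1 then 1 else 0)) P := by
    intro q
    refine integrable_bdd P ?_ (C := 1) ?_
    · exact Measurable.aestronglyMeasurable (by
        apply Measurable.mul
        · fun_prop
        · exact Measurable.ite (measurableSet_le measurable_const (by fun_prop))
            measurable_const measurable_const)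
    · filter_upwards [hB] with x hx
      exact le_trans (habs_ite _ _) hx.2.2.2.2.1
  have hintG2 : ∀ q, Integrable (fun x : ℝ × ℝ × ℝ =>
      (x.1 - x.2.2) * (if q ≤ x.1 then 1 else 0)) P := by
    intro q
    refine integrable_bdd P ?_ (C := 1) ?_
    · exact Measurable.aestronglyMeasurable (by
        apply Measurable.mul
        · fun_prop
        · exact Measurable.ite (measurableSet_le measurable_const (by fun_prop))
            measurable_const measurable_const)
    · filter_upwards [hB] with x hx
      exact le_trans (habs_ite _ _) hx.2.2.2.2.2
  have hzeroNeg : ∀ q : ℝ, ∫ x, (x.1 - x.2.2) * (if x.1 < q then 1 else 0) ∂P = 0 := by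
    intro q
    have h := cal_zero P hcal hb' (Set.Iio q) measurableSet_Iio
    refine Eq.trans ?_ h
    apply integral_congr_ae
    filter_upwards with x
    by_cases hx : x.1 < q <;> simp [Set.indicator_apply, Set.mem_preimage, Set.mem_Iio, hx]
  have hzeroPos : ∀ q : ℝ, ∫ x, (x.1 - x.2.2) * (if q ≤ x.1 then 1 else 0) ∂P = 0 := by
    intro q
    have h := cal_zero P hcal hb' (Set.Ici q) measurableSet_Ici
    refine Eq.trans ?_ h
    apply integral_congr_ae
    filter_upwards with x
    by_cases hx : q ≤ x.1 <;> simp [Set.indicator_apply, Set.mem_preimage, Set.mem_Ici, hx]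
  have hbinNeg : ∀ q : ℝ, binNeg mu q = ∫ x, F q x ∂P := by
    intro q
    have hm : Measurable (fun z : ℝ × ℝ => (z.1 - z.2) * (if z.1 < q then 1 else 0)) := by
      apply Measurable.mul
      · fun_prop
      · exact Measurable.ite (measurableSet_lt (by fun_prop) measurable_const)
          measurable_const measurable_const
    rw [hF]
    rw [integral_sub (hintF1 q) (hintF2 q), hzeroNeg q, sub_zero, binNeg, ← hmap,
      integral_map measurable_snd.aemeasurable hm.aestronglyMeasurable]
  have hbinPos : ∀ q : ℝ, binPos mu q = ∫ x, G q x ∂P := by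
    intro q
    have hm : Measurable (fun z : ℝ × ℝ => (z.1 - z.2) * (if q ≤ z.1 then 1 else 0)) := by
      apply Measurable.mul
      · fun_prop
      · exact Measurable.ite (measurableSet_le measurable_const (by fun_prop))
          measurable_const measurable_const
    rw [hG]
    rw [integral_sub (hintG1 q) (hintG2 q), hzeroPos q, sub_zero, binPos, ← hmap,
      integral_map measurable_snd.aemeasurable hm.aestronglyMeasurable]
  -- the φ, ψ functions
  set φ : ℝ → ℝ := fun q => ∫ x : ℝ × ℝ × ℝ,
    (if x.2.1 ⊓ x.1 < q ∧ q ≤ x.2.1 ⊔ x.1 then (1:ℝ) else 0) ∂P with hφ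
  set ψ1 : ℝ → ℝ := fun q => ∫ x : ℝ × ℝ × ℝ,
    (if x.2.1 ⊓ x.1 < q then (1:ℝ) else 0) ∂P with hψ1
  set ψ2 : ℝ → ℝ := fun q => ∫ x : ℝ × ℝ × ℝ,
    (if x.2.1 ⊔ x.1 < q then (1:ℝ) else 0) ∂P with hψ2
  have hite01 : ∀ (p : Prop) [Decidable p], |if p then (1:ℝ) else 0| ≤ 1 := by
    intro p _; split_ifs <;> norm_num
  have hmφ : ∀ q, Measurable (fun x : ℝ × ℝ × ℝ =>
      (if x.2.1 ⊓ x.1 < q ∧ q ≤ x.2.1 ⊔ x.1 then (1:ℝ) else 0)) := by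
    intro q
    refine Measurable.ite ?_ measurable_const measurable_const
    have m1 : Measurable (fun x : ℝ × ℝ × ℝ => x.2.1 ⊓ x.1) := by fun_prop
    have m2 : Measurable (fun x : ℝ × ℝ × ℝ => x.2.1 ⊔ x.1) := by fun_prop
    exact ((measurableSet_lt m1 measurable_const).inter
      (measurableSet_le measurable_const m2))
  have hmψ1 : ∀ q, Measurable (fun x : ℝ × ℝ × ℝ =>
      (if x.2.1 ⊓ x.1 < q then (1:ℝ) else 0)) := by
    intro q
    exact Measurable.ite (measurableSet_lt (by fun_prop) measurable_const)
      measurable_const measurable_const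
  have hmψ2 : ∀ q, Measurable (fun x : ℝ × ℝ × ℝ =>
      (if x.2.1 ⊔ x.1 < q then (1:ℝ) else 0)) := by
    intro q
    exact Measurable.ite (measurableSet_lt (by fun_prop) measurable_const)
      measurable_const measurable_const
  have hintφ : ∀ q, Integrable (fun x : ℝ × ℝ × ℝ =>
      (if x.2.1 ⊓ x.1 < q ∧ q ≤ x.2.1 ⊔ x.1 then (1:ℝ) else 0)) P := fun q =>
    integrable_bdd P (hmφ q).aestronglyMeasurable (ae_of_all _ fun x => hite01 _)
  have hintψ1 : ∀ q, Integrable (fun x : ℝ × ℝ × ℝ =>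
      (if x.2.1 ⊓ x.1 < q then (1:ℝ) else 0)) P := fun q =>
    integrable_bdd P (hmψ1 q).aestronglyMeasurable (ae_of_all _ fun x => hite01 _)
  have hintψ2 : ∀ q, Integrable (fun x : ℝ × ℝ × ℝ =>
      (if x.2.1 ⊔ x.1 < q then (1:ℝ) else 0)) P := fun q =>
    integrable_bdd P (hmψ2 q).aestronglyMeasurable (ae_of_all _ fun x => hite01 _)
  have hiAbs : Integrable (fun x : ℝ × ℝ × ℝ => |x.1 - x.2.1|) P := by
    refine integrable_bdd P ((measurable_fst.sub measurable_snd.fst).abs).aestronglyMeasurable (C := 2) ?_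
    filter_upwards [hB] with x hx
    rw [abs_abs, abs_le]
    obtain ⟨h1, h2, h3, h4, -, -⟩ := hx
    constructor <;> linarith
  -- key pointwise-in-q bound
  have key : ∀ q : ℝ, |binNeg mu q| + |binPos mu q| ≤ c + 2 * φ q := by
    intro q
    have h1 : |binNeg mu q| ≤ ∫ x, |F q x| ∂P := by
      rw [hbinNeg q]
      simpa [Real.norm_eq_abs] using norm_integral_le_integral_norm (F q) (μ := P)
    have h2 : |binPos mu q| ≤ ∫ x, |G q x| ∂P := by
      rw [hbinPos q]
      simpa [Real.norm_eq_abs] using norm_integral_le_integral_norm (G q) (μ := P)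
    have hiF : Integrable (fun x => |F q x|) P := ((hintF1 q).sub (hintF2 q)).abs
    have hiG : Integrable (fun x => |G q x|) P := ((hintG1 q).sub (hintG2 q)).abs
    have h3 : ∫ x, |F q x| ∂P + ∫ x, |G q x| ∂P = ∫ x, (|F q x| + |G q x|) ∂P :=
      (integral_add hiF hiG).symm
    have h4 : ∫ x, (|F q x| + |G q x|) ∂P ≤ ∫ x, (|x.1 - x.2.1| +
        2 * (if x.2.1 ⊓ x.1 < q ∧ q ≤ x.2.1 ⊔ x.1 then (1:ℝ) else 0)) ∂P := by
      refine integral_mono_ae (hiF.add hiG) (hiAbs.add ((hintφ q).const_mul 2)) ?_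
      filter_upwards [hB] with x hx
      exact pointwise_bound x.1 x.2.1 x.2.2 q hx.2.2.2.2.1 hx.2.2.2.2.2
    have h5 : ∫ x, (|x.1 - x.2.1| +
        2 * (if x.2.1 ⊓ x.1 < q ∧ q ≤ x.2.1 ⊔ x.1 then (1:ℝ) else 0)) ∂P = c + 2 * φ q := by
      rw [integral_add hiAbs ((hintφ q).const_mul 2), integral_const_mul, hφ, hc]
    linarith
  -- monotone pieces and interval integrability
  have hψ1mono : Monotone ψ1 := by
    intro a b hab
    refine integral_mono (hintψ1 a) (hintψ1 b) fun x => ?_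
    dsimp only
    by_cases h : x.2.1 ⊓ x.1 < a
    · rw [if_pos h, if_pos (lt_of_lt_of_le h hab)]
    · rw [if_neg h]; split_ifs <;> norm_num
  have hψ2mono : Monotone ψ2 := by
    intro a b hab
    refine integral_mono (hintψ2 a) (hintψ2 b) fun x => ?_
    dsimp only
    by_cases h : x.2.1 ⊔ x.1 < a
    · rw [if_pos h, if_pos (lt_of_lt_of_le h hab)]
    · rw [if_neg h]; split_ifs <;> norm_num
  have hφeq : φ = fun q => ψ1 q - ψ2 q := by
    funext q
    rw [hφ, hψ1, hψ2]
    dsimp only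
    rw [show (fun x : ℝ × ℝ × ℝ => if x.2.1 ⊓ x.1 < q ∧ q ≤ x.2.1 ⊔ x.1 then (1:ℝ) else 0)
        = fun x => (if x.2.1 ⊓ x.1 < q then (1:ℝ) else 0) - (if x.2.1 ⊔ x.1 < q then (1:ℝ) else 0)
      from funext fun x => ite_split _ _ q inf_le_sup]
    exact integral_sub (hintψ1 q) (hintψ2 q)
  have hφInt : IntervalIntegrable φ volume 0 1 := by
    rw [hφeq]
    exact (hψ1mono.intervalIntegrable).sub (hψ2mono.intervalIntegrable)
  -- Fubini
  have hfub : ∫ q in (0:ℝ)..1, φ q = c := by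
    rw [intervalIntegral.integral_of_le (by norm_num : (0:ℝ) ≤ 1)]
    haveI : IsFiniteMeasure (volume.restrict (Set.Ioc (0:ℝ) 1)) := by
      constructor
      rw [Measure.restrict_apply_univ, Real.volume_Ioc]
      simp
    have hintProd : Integrable (Function.uncurry fun (q : ℝ) (x : ℝ × ℝ × ℝ) =>
        (if x.2.1 ⊓ x.1 < q ∧ q ≤ x.2.1 ⊔ x.1 then (1:ℝ) else 0))
        ((volume.restrict (Set.Ioc (0:ℝ) 1)).prod P) := by
      refine integrable_bdd _ ?_ (C := 1) (ae_of_all _ fun p => hite01 _)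
      refine Measurable.aestronglyMeasurable ?_
      refine Measurable.ite ?_ measurable_const measurable_const
      have m1 : Measurable (fun p : ℝ × (ℝ × ℝ × ℝ) => p.2.2.1 ⊓ p.2.1) := by fun_prop
      have m2 : Measurable (fun p : ℝ × (ℝ × ℝ × ℝ) => p.2.2.1 ⊔ p.2.1) := by fun_prop
      exact ((measurableSet_lt m1 measurable_fst).inter
        (measurableSet_le measurable_fst m2))
    have hswap := MeasureTheory.integral_integral_swap hintProd
    refine Eq.trans hswap ?_
    rw [hc]
    apply integral_congr_ae
    filter_upwards [hB] with x hx
    obtain ⟨h1, h2, h3, h4, -, -⟩ := hx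
    have hsub : Set.Ioc (x.2.1 ⊓ x.1) (x.2.1 ⊔ x.1) ⊆ Set.Ioc 0 1 :=
      Set.Ioc_subset_Ioc (le_inf h3 h1) (sup_le h4 h2)
    have hind : (fun q => if x.2.1 ⊓ x.1 < q ∧ q ≤ x.2.1 ⊔ x.1 then (1:ℝ) else 0)
        = (Set.Ioc (x.2.1 ⊓ x.1) (x.2.1 ⊔ x.1)).indicator (fun _ => (1:ℝ)) := by
      funext q
      by_cases h : x.2.1 ⊓ x.1 < q ∧ q ≤ x.2.1 ⊔ x.1 <;>
        simp [Set.indicator_apply, Set.mem_Ioc, h]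
    rw [hind, setIntegral_indicator measurableSet_Ioc,
      Set.inter_eq_self_of_subset_right hsub]
    simp [Real.volume_Ioc, ENNReal.toReal_ofReal (sub_nonneg.2 (inf_le_sup (a := x.2.1) (b := x.1)))]
    rw [max_sub_min_eq_abs, abs_sub_comm]
  -- assembly
  rw [l1ATB]
  by_cases hI : IntervalIntegrable (fun q => |binNeg mu q| + |binPos mu q|) volume 0 1
  · have hRint : IntervalIntegrable (fun q => c + 2 * φ q) volume 0 1 :=
      intervalIntegrable_const.add (hφInt.const_mul 2)
    have h1 : ∫ q in (0:ℝ)..1, (|binNeg mu q| + |binPos mu q|) ≤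
        ∫ q in (0:ℝ)..1, (c + 2 * φ q) :=
      intervalIntegral.integral_mono_on (by norm_num) hI hRint (fun q _ => key q)
    have h2 : ∫ q in (0:ℝ)..1, (c + 2 * φ q) = c + 2 * ∫ q in (0:ℝ)..1, φ q := by
      rw [intervalIntegral.integral_add intervalIntegrable_const (hφInt.const_mul 2),
        intervalIntegral.integral_const_mul, intervalIntegral.integral_const]
      simp
    rw [h2, hfub] at h1
    linarith
  · rw [intervalIntegral.integral_undef hI]
    linarith


lemma witness_mem (mu : Measure (ℝ × ℝ)) [IsProbabilityMeasure mu]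
    (hsupp : ∀ᵐ x ∂mu, x.1 ∈ Set.Icc (0:ℝ) 1 ∧ (x.2 = 0 ∨ x.2 = 1)) :
    Set.Nonempty { c : ℝ | ∃ P : Measure (ℝ × ℝ × ℝ), IsProbabilityMeasure P ∧
      P.map (fun x => x.2) = mu ∧
      Calibrated (P.map (fun x => (x.1, x.2.2))) ∧
      (∀ᵐ x ∂P, x.1 ∈ Set.Icc (0:ℝ) 1) ∧
      c = ∫ x, |x.1 - x.2.1| ∂P } := by
  have hm : Measurable (fun z : ℝ × ℝ => (z.2, z)) := measurable_snd.prodMk measurable_id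
  refine ⟨∫ x, |x.1 - x.2.1| ∂(mu.map (fun z : ℝ × ℝ => (z.2, z))),
    mu.map (fun z : ℝ × ℝ => (z.2, z)), ?_, ?_, ?_, ?_, rfl⟩
  · exact Measure.isProbabilityMeasure_map hm.aemeasurable
  · rw [Measure.map_map measurable_snd hm]
    exact Measure.map_id
  · rw [Measure.map_map (by fun_prop) hm]
    intro s hs
    rw [setIntegral_map (hs.preimage measurable_fst)
        measurable_snd.aestronglyMeasurable (by fun_prop),
      setIntegral_map (hs.preimage measurable_fst)
        measurable_fst.aestronglyMeasurable (by fun_prop)]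
    rfl
  · rw [ae_map_iff hm.aemeasurable (measurable_fst measurableSet_Icc)]
    filter_upwards [hsupp] with z hz
    show z.2 ∈ Set.Icc (0:ℝ) 1
    rcases hz.2 with h | h <;> rw [h] <;> constructor <;> norm_num


/-- ℓ1-ATB is at most three times the lower distance to calibration. -/
theorem l1atb_le_distCal (mu : Measure (ℝ × ℝ)) [IsProbabilityMeasure mu]
    (hsupp : ∀ᵐ x ∂mu, x.1 ∈ Set.Icc (0:ℝ) 1 ∧ (x.2 = 0 ∨ x.2 = 1)) :
    l1ATB mu ≤ 3 * distCal mu := by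
  have hne := witness_mem mu hsupp
  have hkey : ∀ b ∈ { c : ℝ | ∃ P : Measure (ℝ × ℝ × ℝ), IsProbabilityMeasure P ∧
      P.map (fun x => x.2) = mu ∧
      Calibrated (P.map (fun x => (x.1, x.2.2))) ∧
      (∀ᵐ x ∂P, x.1 ∈ Set.Icc (0:ℝ) 1) ∧
      c = ∫ x, |x.1 - x.2.1| ∂P }, l1ATB mu / 3 ≤ b := by
    rintro b ⟨P, hP, hmapP, hcalP, huP, rfl⟩
    haveI := hP
    have h := main_bound mu hsupp P hmapP hcalP huP
    linarith
  have h := le_csInf hne hkey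
  rw [distCal]
  linarith

end
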